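/- Let 1 ≤ p < ∞ and t ∈ [0,1). Let S be the right-shift on ℓ^p, (Sx) = (0, x_0, x_1, …), and D_φ the diagonal operator (D_φ x)_n = x_n/(n+1). Then the series ∑_{n=0}^∞ t^n D_φ S^n converges absolutely in the operator norm of bounded operators on ℓ^p, its sum equals the generalized Cesàro operator C_t, and in particular C_t = D_φ R_t where R_t = ∑_{n=0}^∞ t^n S^n is a bounded operator on ℓ^p with ‖R_t‖ ≤ 1/(1−t). -/

import Mathlib

open scoped ENNReal

set_option maxHeartbeats 1000000 in
set_option synthInstance.maxHeartbeats 200000 in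
/-- Let `1 ≤ p < ∞` and `t ∈ [0,1)`. Let `S` be the right shift on `ℓ^p`, `D_φ` the
diagonal operator `(D_φ x)_n = x_n/(n+1)`, and `C_t` the generalized Cesàro operator
(all given by their coordinate formulas). Then the series `∑ tⁿ D_φ Sⁿ` converges
absolutely in operator norm to `C_t`; in particular `C_t = D_φ R_t` where
`R_t = ∑ tⁿ Sⁿ` is a bounded operator with `‖R_t‖ ≤ 1/(1-t)`. -/
theorem genCesaro_factorization_lp (p : ℝ≥0∞) [Fact (1 ≤ p)] (hp : p ≠ ⊤)
    (t : ℝ) (ht : t ∈ Set.Ico (0 : ℝ) 1)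
    (S D C : lp (fun _ : ℕ => ℂ) p →L[ℂ] lp (fun _ : ℕ => ℂ) p)
    (hS : ∀ (x : lp (fun _ : ℕ => ℂ) p) (n : ℕ),
      (S x : ℕ → ℂ) n = if n = 0 then 0 else (x : ℕ → ℂ) (n - 1))
    (hD : ∀ (x : lp (fun _ : ℕ => ℂ) p) (n : ℕ),
      (D x : ℕ → ℂ) n = (x : ℕ → ℂ) n / ((n : ℂ) + 1))
    (hC : ∀ (x : lp (fun _ : ℕ => ℂ) p) (n : ℕ),
      (C x : ℕ → ℂ) n =
        (1 / ((n : ℂ) + 1)) * ∑ i ∈ Finset.range (n + 1), (t : ℂ) ^ (n - i) * (x : ℕ → ℂ) i) :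
    Summable (fun n : ℕ => ‖(t : ℂ) ^ n • (D ∘L S ^ n)‖) ∧
    HasSum (fun n : ℕ => (t : ℂ) ^ n • (D ∘L S ^ n)) C ∧
    ∃ R : lp (fun _ : ℕ => ℂ) p →L[ℂ] lp (fun _ : ℕ => ℂ) p,
      HasSum (fun n : ℕ => (t : ℂ) ^ n • (S ^ n)) R ∧
      ‖R‖ ≤ 1 / (1 - t) ∧ C = D ∘L R := by
  obtain ⟨ht0, ht1⟩ := ht
  have hp1 : (1 : ℝ≥0∞) ≤ p := Fact.out
  have hq : 0 < p.toReal := by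
    have : (1 : ℝ≥0∞) ≤ p := hp1
    have h1 : (0 : ℝ≥0∞) < p := lt_of_lt_of_le (by norm_num) this
    exact ENNReal.toReal_pos h1.ne' hp
  set q := p.toReal with hqdef
  -- S is an isometry
  have hSnorm : ∀ x : lp (fun _ : ℕ => ℂ) p, ‖S x‖ = ‖x‖ := by
    intro x
    have hsum : Summable fun k : ℕ => ‖(S x : ℕ → ℂ) k‖ ^ q :=
      (lp.memℓp (S x)).summable hq
    have hpow : ‖S x‖ ^ q = ‖x‖ ^ q := by
      rw [lp.norm_rpow_eq_tsum hq, lp.norm_rpow_eq_tsum hq]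
      rw [Summable.tsum_eq_zero_add hsum]
      simp only [hS]
      simp [Real.zero_rpow hq.ne']
      rfl
    have h1 : ‖S x‖ ≤ ‖x‖ := by
      by_contra h
      push_neg at h
      exact absurd hpow (ne_of_gt (Real.rpow_lt_rpow (norm_nonneg _) h hq))
    have h2 : ‖x‖ ≤ ‖S x‖ := by
      by_contra h
      push_neg at h
      exact absurd hpow.symm (ne_of_gt (Real.rpow_lt_rpow (norm_nonneg _) h hq))
    exact le_antisymm h1 h2
  have hSop : ‖S‖ ≤ 1 := by
    refine ContinuousLinearMap.opNorm_le_bound _ zero_le_one fun x => ?_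
    rw [hSnorm, one_mul]
  have hSnop : ∀ n : ℕ, ‖S ^ n‖ ≤ 1 := by
    intro n
    rcases Nat.eq_zero_or_pos n with hn | hn
    · rw [hn, pow_zero]; exact ContinuousLinearMap.norm_id_le
    · exact (norm_pow_le' S hn).trans (pow_le_one₀ (norm_nonneg _) hSop)
  -- coordinate formula for Sⁿ
  have hSn : ∀ (n : ℕ) (x : lp (fun _ : ℕ => ℂ) p) (k : ℕ),
      ((S ^ n) x : ℕ → ℂ) k = if k < n then 0 else (x : ℕ → ℂ) (k - n) := by
    intro n
    induction n with
    | zero => intro x k; simp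
    | succ n ih =>
      intro x k
      have : (S ^ (n + 1)) x = S ((S ^ n) x) := by
        rw [pow_succ']; rfl
      rw [this, hS]
      rcases Nat.eq_zero_or_pos k with hk | hk
      · simp [hk]
      · have hk0 : k ≠ 0 := hk.ne'
        simp only [hk0, if_false]
        rw [ih]
        have h1 : k - 1 < n ↔ k < n + 1 := by omega
        have h2 : k - 1 - n = k - (n + 1) := by omega
        rw [h2]
        simp only [h1]
  -- norm bounds
  have hBnorm : ∀ n : ℕ, ‖(t : ℂ) ^ n • (D ∘L S ^ n)‖ ≤ ‖D‖ * t ^ n := by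
    intro n
    have hnt : ‖(t : ℂ) ^ n‖ = t ^ n := by
      rw [norm_pow, Complex.norm_real, Real.norm_of_nonneg ht0]
    calc ‖(t : ℂ) ^ n • (D ∘L S ^ n)‖ ≤ ‖(t : ℂ) ^ n‖ * ‖D ∘L S ^ n‖ := ContinuousLinearMap.opNorm_smul_le _ _
      _ = t ^ n * ‖D ∘L S ^ n‖ := by rw [hnt]
      _ ≤ t ^ n * (‖D‖ * ‖S ^ n‖) :=
          mul_le_mul_of_nonneg_left (ContinuousLinearMap.opNorm_comp_le _ _)
            (pow_nonneg ht0 n)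
      _ ≤ t ^ n * (‖D‖ * 1) := by
          apply mul_le_mul_of_nonneg_left _ (pow_nonneg ht0 n)
          exact mul_le_mul_of_nonneg_left (hSnop n) (norm_nonneg _)
      _ = ‖D‖ * t ^ n := by ring
  have hgeo : Summable fun n : ℕ => t ^ n := summable_geometric_of_lt_one ht0 ht1
  have hsum1 : Summable (fun n : ℕ => ‖(t : ℂ) ^ n • (D ∘L S ^ n)‖) :=
    Summable.of_nonneg_of_le (fun n => norm_nonneg _) hBnorm (hgeo.mul_left ‖D‖)
  have hsumB : Summable (fun n : ℕ => (t : ℂ) ^ n • (D ∘L S ^ n)) :=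
    Summable.of_norm hsum1
  -- evaluation CLM at coordinate k
  have hEval : ∀ k : ℕ, ∃ E : lp (fun _ : ℕ => ℂ) p →L[ℂ] ℂ,
      ∀ x, E x = (x : ℕ → ℂ) k := by
    intro k
    refine ⟨LinearMap.mkContinuous
      { toFun := fun x => (x : ℕ → ℂ) k
        map_add' := fun x y => by simp
        map_smul' := fun c x => by simp } 1
      (fun x => by
        show ‖(x : ℕ → ℂ) k‖ ≤ 1 * ‖x‖; simpa using lp.norm_apply_le_norm (by
          intro h0; rw [h0] at hp1; simp at hp1) x k), fun x => rfl⟩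
  -- pointwise sums
  have hptC : ∀ (x : lp (fun _ : ℕ => ℂ) p) (k : ℕ),
      HasSum (fun n : ℕ => ((((t : ℂ) ^ n • (D ∘L S ^ n)) x : lp (fun _ : ℕ => ℂ) p) : ℕ → ℂ) k)
        ((C x : ℕ → ℂ) k) := by
    intro x k
    have hcoord : ∀ n : ℕ,
        ((((t : ℂ) ^ n • (D ∘L S ^ n)) x : lp (fun _ : ℕ => ℂ) p) : ℕ → ℂ) k =
          if k < n then 0 else (t : ℂ) ^ n * (x : ℕ → ℂ) (k - n) / ((k : ℂ) + 1) := by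
      intro n
      have : (((t : ℂ) ^ n • (D ∘L S ^ n)) x) = (t : ℂ) ^ n • (D ((S ^ n) x)) := rfl
      rw [this]
      have : ((((t : ℂ) ^ n • (D ((S ^ n) x))) : lp (fun _ : ℕ => ℂ) p) : ℕ → ℂ) k
          = (t : ℂ) ^ n * ((D ((S ^ n) x) : ℕ → ℂ) k) := by
        rw [lp.coeFn_smul]; simp
      rw [this, hD, hSn]
      by_cases h : k < n <;> simp [h, mul_div_assoc]
    have hfin : ∀ n ∉ Finset.range (k + 1),
        ((((t : ℂ) ^ n • (D ∘L S ^ n)) x : lp (fun _ : ℕ => ℂ) p) : ℕ → ℂ) k = 0 := by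
      intro n hn
      rw [hcoord]
      have hkn : k < n := by
        simp only [Finset.mem_range] at hn; omega
      rw [if_pos hkn]
    have h1 : HasSum (fun n : ℕ =>
        ((((t : ℂ) ^ n • (D ∘L S ^ n)) x : lp (fun _ : ℕ => ℂ) p) : ℕ → ℂ) k)
        (∑ n ∈ Finset.range (k + 1),
          ((((t : ℂ) ^ n • (D ∘L S ^ n)) x : lp (fun _ : ℕ => ℂ) p) : ℕ → ℂ) k) :=
      hasSum_sum_of_ne_finset_zero hfin
    have h2 : (∑ n ∈ Finset.range (k + 1),
          ((((t : ℂ) ^ n • (D ∘L S ^ n)) x : lp (fun _ : ℕ => ℂ) p) : ℕ → ℂ) k)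
        = (C x : ℕ → ℂ) k := by
      rw [hC]
      rw [Finset.mul_sum]
      rw [← Finset.sum_range_reflect]
      refine Finset.sum_congr rfl fun n hn => ?_
      rw [hcoord]
      have hn' : n < k + 1 := Finset.mem_range.mp hn
      have h3 : ¬ k < k + 1 - 1 - n := by omega
      rw [if_neg h3]
      have h4 : k + 1 - 1 - n = k - n := by omega
      have h5 : k - (k - n) = n := by omega
      rw [h4, h5]
      ring
    rw [← h2]
    exact h1
  -- sum of the operator series equals C
  have hB : HasSum (fun n : ℕ => (t : ℂ) ^ n • (D ∘L S ^ n)) C := by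
    obtain ⟨T, hT⟩ := hsumB
    have hTC : T = C := by
      refine ContinuousLinearMap.ext fun x => ?_
      refine lp.ext (funext fun k => ?_)
      obtain ⟨E, hE⟩ := hEval k
      have happ : HasSum (fun n : ℕ => (((t : ℂ) ^ n • (D ∘L S ^ n)) x)) (T x) :=
        hT.mapL (ContinuousLinearMap.apply ℂ _ x)
      have hcoordsum : HasSum
          (fun n : ℕ => ((((t : ℂ) ^ n • (D ∘L S ^ n)) x : lp (fun _ : ℕ => ℂ) p) : ℕ → ℂ) k)
          ((T x : ℕ → ℂ) k) := by
        have := happ.mapL E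
        simpa only [hE] using this
      exact hcoordsum.unique (hptC x k)
    rw [← hTC]; exact hT
  -- now R
  have hRsummable : Summable (fun n : ℕ => (t : ℂ) ^ n • (S ^ n)) := by
    apply Summable.of_norm
    refine Summable.of_nonneg_of_le (fun n => norm_nonneg _) (fun n => ?_) hgeo
    have h1 : ‖(t : ℂ) ^ n‖ = t ^ n := by
      rw [norm_pow, Complex.norm_real, Real.norm_of_nonneg ht0]
    calc ‖(t : ℂ) ^ n • (S ^ n)‖ ≤ ‖(t : ℂ) ^ n‖ * ‖S ^ n‖ := ContinuousLinearMap.opNorm_smul_le _ _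
      _ = t ^ n * ‖S ^ n‖ := by rw [h1]
      _ ≤ t ^ n * 1 :=
          mul_le_mul_of_nonneg_left (hSnop n) (pow_nonneg ht0 n)
      _ = t ^ n := mul_one _
  obtain ⟨R, hR⟩ := hRsummable
  refine ⟨hsum1, hB, R, hR, ?_, ?_⟩
  · have hb : ‖R‖ ≤ (1 - t)⁻¹ := by
      refine hR.norm_le_of_bounded (hasSum_geometric_of_lt_one ht0 ht1) (fun n => ?_)
      have h1 : ‖(t : ℂ) ^ n‖ = t ^ n := by
        rw [norm_pow, Complex.norm_real, Real.norm_of_nonneg ht0]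
      calc ‖(t : ℂ) ^ n • (S ^ n)‖ ≤ ‖(t : ℂ) ^ n‖ * ‖S ^ n‖ := ContinuousLinearMap.opNorm_smul_le _ _
        _ = t ^ n * ‖S ^ n‖ := by rw [h1]
        _ ≤ t ^ n * 1 := mul_le_mul_of_nonneg_left (hSnop n) (pow_nonneg ht0 n)
        _ = t ^ n := mul_one _
    rw [one_div]
    exact hb
  · have hcomp : HasSum (fun n : ℕ => D ∘L ((t : ℂ) ^ n • (S ^ n)))
        (D ∘L R) := by
      have := hR.mapL (ContinuousLinearMap.compL ℂ _ _ _ D)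
      simpa using this
    have heq : (fun n : ℕ => D ∘L ((t : ℂ) ^ n • (S ^ n)))
        = fun n : ℕ => (t : ℂ) ^ n • (D ∘L S ^ n) := by
      funext n
      ext x
      simp
    rw [heq] at hcomp
    exact hB.unique hcomp
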